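/- Fix T₀ > 0 and M, C, L ≥ 0. There is a constant K, depending only on M, C, L and T₀, such that the following holds. Let E be a real Banach space, let T : [0,T₀] → L(E) be a family of bounded linear operators with T_0 = I, T_{s+t} = T_s ∘ T_t whenever s, t, s+t ∈ [0,T₀], and ‖T_t‖ ≤ M for all t ∈ [0,T₀]; let A : E → E be a bounded linear operator with A(T_t x) = T_t(A x) for all t, x, and ‖A ∘ T_t‖ ≤ C/t for all t ∈ (0,T₀]. Let 0 < τ ≤ min(1, T₀), and let (e_n), (E_n), (h_n), (r_n) be sequences in E with e_0 = 0 and e_{n+1} = T_τ(e_n) + E_n + A(h_{n+1}) + r_{n+1} for all n, where ‖E_n‖ ≤ L τ ‖e_n‖, ‖h_n‖ ≤ C τ², ‖r_n‖ ≤ C τ², and ‖A(h_n) + r_n‖ ≤ C τ for all n. Then ‖e_n‖ ≤ K τ (1 + |log τ|) for every n with n τ ≤ T₀. -/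

import Mathlib

open Finset

lemma harm_le (n : ℕ) : ∑ k ∈ range n, (1:ℝ)/(k+1) ≤ 1 + Real.log n := by
  induction n with
  | zero => simp
  | succ m ih =>
    rcases Nat.eq_zero_or_pos m with hm | hm
    · subst hm; simp
    rw [sum_range_succ]
    have hmpos : (0:ℝ) < m := by positivity
    have key : (1:ℝ)/(m+1) ≤ Real.log (m+1) - Real.log m := by
      have h1 : Real.log ((m:ℝ)/(m+1)) ≤ (m:ℝ)/(m+1) - 1 :=
        Real.log_le_sub_one_of_pos (by positivity)
      have h2 : Real.log ((m:ℝ)/(m+1)) = Real.log m - Real.log (m+1) :=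
        Real.log_div (by positivity) (by positivity)
      have h3 : (m:ℝ)/(m+1) - 1 = -(1/(m+1)) := by field_simp; ring
      linarith
    push_cast
    linarith

lemma gronwall_discrete (a R : ℝ) (ha : 0 ≤ a) (hR : 0 ≤ R) (u : ℕ → ℝ) (n : ℕ)
    (H : ∀ k ≤ n, u k ≤ a * ∑ j ∈ range k, u j + R) : u n ≤ R * (1+a)^n := by
  induction n using Nat.strong_induction_on with
  | _ n ih =>
    have hsum : ∑ j ∈ range n, u j ≤ R * ∑ j ∈ range n, (1+a)^j := by
      rw [mul_sum]
      apply sum_le_sum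
      intro j hj
      exact ih j (mem_range.mp hj) (fun k hk => H k (le_trans hk (le_of_lt (mem_range.mp hj))))
    have hgeom : (∑ j ∈ range n, (1+a)^j) * a = (1+a)^n - 1 := by
      have := geom_sum_mul (1+a) n
      simpa using this
    calc u n ≤ a * ∑ j ∈ range n, u j + R := H n le_rfl
      _ ≤ a * (R * ∑ j ∈ range n, (1+a)^j) + R := by nlinarith
      _ = R * (1+a)^n := by nlinarith [hgeom]

set_option maxHeartbeats 1000000 in
theorem error_accumulation_order_one_log
    (T₀ M C L : ℝ) (hT₀ : 0 < T₀) (hM : 0 ≤ M) (hC : 0 ≤ C) (hL : 0 ≤ L) :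
    ∃ K : ℝ,
      ∀ (X : Type*) [NormedAddCommGroup X] [NormedSpace ℝ X],
      ∀ (T : ℝ → X →L[ℝ] X) (A : X →L[ℝ] X),
      T 0 = ContinuousLinearMap.id ℝ X →
      (∀ s t : ℝ, 0 ≤ s → 0 ≤ t → s + t ≤ T₀ → T (s + t) = (T s).comp (T t)) →
      (∀ t ∈ Set.Icc (0:ℝ) T₀, ‖T t‖ ≤ M) →
      (∀ t ∈ Set.Icc (0:ℝ) T₀, ∀ x : X, A (T t x) = T t (A x)) →
      (∀ t ∈ Set.Ioc (0:ℝ) T₀, ‖A.comp (T t)‖ ≤ C / t) →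
      ∀ τ : ℝ, 0 < τ → τ ≤ min 1 T₀ →
      ∀ (e E' h r : ℕ → X),
      e 0 = 0 →
      (∀ n, e (n + 1) = T τ (e n) + E' n + A (h (n + 1)) + r (n + 1)) →
      (∀ n, ‖E' n‖ ≤ L * τ * ‖e n‖) →
      (∀ n, ‖h n‖ ≤ C * τ ^ 2) →
      (∀ n, ‖r n‖ ≤ C * τ ^ 2) →
      (∀ n, ‖A (h n) + r n‖ ≤ C * τ) →
      ∀ n : ℕ, (n : ℝ) * τ ≤ T₀ → ‖e n‖ ≤ K * τ * (1 + |Real.log τ|) := by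
  classical
  set D : ℝ := C + C*C*(1 + max 0 (Real.log T₀)) + M*C*T₀ with hD
  have hD0 : 0 ≤ D := by
    have h1 : (0:ℝ) ≤ max 0 (Real.log T₀) := le_max_left _ _
    positivity
  refine ⟨D * Real.exp ((M+1)*L*T₀), ?_⟩
  intro X _ _ T A hT0 hsemi hTM hcomm hAT τ hτ hτle e E' h r he0 hrec hE hh hr hAhr n hnT
  have hτ1 : τ ≤ 1 := le_trans hτle (min_le_left _ _)
  have hτT₀ : τ ≤ T₀ := le_trans hτle (min_le_right _ _)
  have habs : (0:ℝ) ≤ |Real.log τ| := abs_nonneg _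
  -- representation
  have hrep : ∀ n : ℕ, (n : ℝ) * τ ≤ T₀ →
      e n = ∑ k ∈ range n, T (((n-1-k : ℕ) : ℝ) * τ) (E' k + A (h (k+1)) + r (k+1)) := by
    intro n
    induction n with
    | zero => intro _; simp [he0]
    | succ n ih =>
      intro hn
      have hn' : (n : ℝ) * τ ≤ T₀ := by push_cast at hn; nlinarith
      rw [hrec n, ih hn', map_sum, sum_range_succ]
      have hlast : ((n + 1 - 1 - n : ℕ) : ℝ) * τ = 0 := by norm_num
      rw [hlast, hT0]
      have hterm : ∀ k ∈ range n,
          T τ (T (((n-1-k : ℕ) : ℝ) * τ) (E' k + A (h (k+1)) + r (k+1)))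
            = T (((n + 1 - 1 - k : ℕ) : ℝ) * τ) (E' k + A (h (k+1)) + r (k+1)) := by
        intro k hk
        have hkn : k < n := mem_range.mp hk
        have h1 : (n + 1 - 1 - k : ℕ) = (n - 1 - k) + 1 := by omega
        have h2 : ((n + 1 - 1 - k : ℕ) : ℝ) * τ = τ + ((n - 1 - k : ℕ) : ℝ) * τ := by
          rw [h1]; push_cast; ring
        have h3 : ((n + 1 - 1 - k : ℕ) : ℝ) * τ ≤ T₀ := by
          have h4 : (n + 1 - 1 - k : ℕ) ≤ n + 1 := by omega
          have h5 : ((n + 1 - 1 - k : ℕ) : ℝ) ≤ (n:ℝ) + 1 := by exact_mod_cast h4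
          push_cast at hn
          nlinarith
        rw [h2, hsemi τ (((n - 1 - k : ℕ) : ℝ) * τ) hτ.le (by positivity) (by rw [← h2]; exact h3)]
        rfl
      rw [sum_congr rfl hterm]
      simp [add_assoc]
  -- per-step cost function
  set c : ℕ → ℝ := fun m => if m = 0 then C*τ else C*C*τ/m + M*C*τ^2 with hc
  -- norm recursion bound
  have hbound : ∀ n : ℕ, (n : ℝ) * τ ≤ T₀ →
      ‖e n‖ ≤ (M+1)*L*τ * ∑ k ∈ range n, ‖e k‖ + ∑ m ∈ range n, c m := by
    intro n hn
    rw [hrep n hn]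
    calc ‖∑ k ∈ range n, T (((n-1-k : ℕ) : ℝ) * τ) (E' k + A (h (k+1)) + r (k+1))‖
        ≤ ∑ k ∈ range n, ‖T (((n-1-k : ℕ) : ℝ) * τ) (E' k + A (h (k+1)) + r (k+1))‖ :=
          norm_sum_le _ _
      _ ≤ ∑ k ∈ range n, ((M+1)*L*τ*‖e k‖ + c (n-1-k)) := by
          apply sum_le_sum
          intro k hk
          have hkn : k < n := mem_range.mp hk
          have hek : (0:ℝ) ≤ ‖e k‖ := norm_nonneg _
          rcases Nat.eq_zero_or_pos (n-1-k) with hm | hm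
          · -- m = 0 : T is identity
            rw [hm]
            have : ((0:ℕ):ℝ) * τ = 0 := by norm_num
            rw [this, hT0]
            simp only [hc, if_pos rfl]
            calc ‖(ContinuousLinearMap.id ℝ X) (E' k + A (h (k+1)) + r (k+1))‖
                = ‖E' k + (A (h (k+1)) + r (k+1))‖ := by rw [add_assoc]; rfl
              _ ≤ ‖E' k‖ + ‖A (h (k+1)) + r (k+1)‖ := norm_add_le _ _
              _ ≤ L*τ*‖e k‖ + C*τ := add_le_add (hE k) (hAhr (k+1))
              _ ≤ (M+1)*L*τ*‖e k‖ + C*τ := by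
                  nlinarith [mul_nonneg (mul_nonneg (mul_nonneg hM hL) hτ.le) hek]
          · -- m ≥ 1
            set m : ℕ := n - 1 - k with hmdef
            have hm1 : (1:ℝ) ≤ (m:ℝ) := by exact_mod_cast hm
            have ht0 : 0 < (m:ℝ) * τ := by nlinarith
            have htT : (m:ℝ) * τ ≤ T₀ := by
              have : (m:ℕ) ≤ n := by omega
              have h5 : ((m:ℕ):ℝ) ≤ (n:ℝ) := by exact_mod_cast this
              nlinarith
            have hmem : (m:ℝ)*τ ∈ Set.Icc (0:ℝ) T₀ := ⟨ht0.le, htT⟩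
            have hmem' : (m:ℝ)*τ ∈ Set.Ioc (0:ℝ) T₀ := ⟨ht0, htT⟩
            have hTMm : ‖T ((m:ℝ)*τ)‖ ≤ M := hTM _ hmem
            have hsplit : T ((m:ℝ)*τ) (E' k + A (h (k+1)) + r (k+1))
                = T ((m:ℝ)*τ) (E' k) + A (T ((m:ℝ)*τ) (h (k+1))) + T ((m:ℝ)*τ) (r (k+1)) := by
              rw [map_add, map_add, hcomm _ hmem]
            have hb1 : ‖T ((m:ℝ)*τ) (E' k)‖ ≤ M * (L*τ*‖e k‖) := by
              calc ‖T ((m:ℝ)*τ) (E' k)‖ ≤ ‖T ((m:ℝ)*τ)‖ * ‖E' k‖ :=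
                    (T ((m:ℝ)*τ)).le_opNorm _
                _ ≤ M * (L*τ*‖e k‖) := by
                    apply mul_le_mul hTMm (hE k) (norm_nonneg _) hM
            have hb2 : ‖A (T ((m:ℝ)*τ) (h (k+1)))‖ ≤ C*C*τ/m := by
              have : A (T ((m:ℝ)*τ) (h (k+1))) = (A.comp (T ((m:ℝ)*τ))) (h (k+1)) := rfl
              rw [this]
              calc ‖(A.comp (T ((m:ℝ)*τ))) (h (k+1))‖
                  ≤ ‖A.comp (T ((m:ℝ)*τ))‖ * ‖h (k+1)‖ := ContinuousLinearMap.le_opNorm _ _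
                _ ≤ (C / ((m:ℝ)*τ)) * (C*τ^2) := by
                    apply mul_le_mul (hAT _ hmem') (hh (k+1)) (norm_nonneg _)
                    positivity
                _ = C*C*τ/m := by field_simp
            have hb3 : ‖T ((m:ℝ)*τ) (r (k+1))‖ ≤ M * (C*τ^2) := by
              calc ‖T ((m:ℝ)*τ) (r (k+1))‖ ≤ ‖T ((m:ℝ)*τ)‖ * ‖r (k+1)‖ :=
                    (T ((m:ℝ)*τ)).le_opNorm _
                _ ≤ M * (C*τ^2) := mul_le_mul hTMm (hr (k+1)) (norm_nonneg _) hM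
            have hcm : c m = C*C*τ/m + M*C*τ^2 := by
              simp only [hc]; rw [if_neg (by omega)]
            rw [hsplit, hcm]
            calc ‖T ((m:ℝ)*τ) (E' k) + A (T ((m:ℝ)*τ) (h (k+1))) + T ((m:ℝ)*τ) (r (k+1))‖
                ≤ ‖T ((m:ℝ)*τ) (E' k)‖ + ‖A (T ((m:ℝ)*τ) (h (k+1)))‖ + ‖T ((m:ℝ)*τ) (r (k+1))‖ :=
                  norm_add₃_le
              _ ≤ M * (L*τ*‖e k‖) + C*C*τ/m + M * (C*τ^2) :=
                  add_le_add (add_le_add hb1 hb2) hb3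
              _ ≤ (M+1)*L*τ*‖e k‖ + (C*C*τ/m + M*C*τ^2) := by
                  nlinarith [mul_nonneg (mul_nonneg hL hτ.le) hek]
      _ = (M+1)*L*τ * ∑ k ∈ range n, ‖e k‖ + ∑ k ∈ range n, c (n-1-k) := by
          rw [sum_add_distrib, mul_sum]
      _ = (M+1)*L*τ * ∑ k ∈ range n, ‖e k‖ + ∑ m ∈ range n, c m := by
          rw [sum_range_reflect]
  -- bound on the cost sum
  have hcost : ∀ n : ℕ, (n : ℝ) * τ ≤ T₀ →
      ∑ m ∈ range n, c m ≤ D * τ * (1 + |Real.log τ|) := by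
    intro n hn
    have hRpos : 0 ≤ D * τ * (1 + |Real.log τ|) := by positivity
    cases n with
    | zero => simpa using hRpos
    | succ n' =>
      rw [sum_range_succ']
      have hc0 : c 0 = C*τ := by simp [hc]
      have hci : ∀ i ∈ range n', c (i+1) = C*C*τ/(i+1) + M*C*τ^2 := by
        intro i _; simp only [hc]; rw [if_neg (by omega)]; push_cast; ring_nf
      rw [sum_congr rfl hci, hc0, sum_add_distrib]
      have hs1 : ∑ i ∈ range n', C*C*τ/((i:ℝ)+1) = C*C*τ * ∑ i ∈ range n', (1:ℝ)/((i:ℝ)+1) := by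
        rw [mul_sum]; apply sum_congr rfl; intro i _; field_simp
      have hs2 : ∑ _i ∈ range n', M*C*τ^2 = (n':ℝ) * (M*C*τ^2) := by
        rw [sum_const, card_range, nsmul_eq_mul]
      rw [hs1, hs2]
      have hharm : ∑ i ∈ range n', (1:ℝ)/((i:ℝ)+1) ≤ 1 + Real.log n' := harm_le n'
      have hn'T : (n':ℝ) * τ ≤ T₀ := by push_cast at hn; nlinarith
      have hlogn : Real.log n' ≤ max 0 (Real.log T₀) + |Real.log τ| := by
        rcases Nat.eq_zero_or_pos n' with h0 | h0
        · subst h0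
          simp only [Nat.cast_zero, Real.log_zero]
          have : (0:ℝ) ≤ max 0 (Real.log T₀) := le_max_left _ _
          linarith
        · have hn'1 : (1:ℝ) ≤ (n':ℝ) := by exact_mod_cast h0
          have hle : (n':ℝ) ≤ T₀/τ := by
            rw [le_div_iff₀ hτ]; linarith
          calc Real.log n' ≤ Real.log (T₀/τ) := Real.log_le_log (by linarith) hle
            _ = Real.log T₀ - Real.log τ := Real.log_div (by linarith) (by linarith)
            _ ≤ max 0 (Real.log T₀) + |Real.log τ| := by
                have := le_max_right 0 (Real.log T₀)
                have := neg_abs_le (Real.log τ)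
                have := le_max_right (0:ℝ) (Real.log T₀)
                have h1 : Real.log T₀ ≤ max 0 (Real.log T₀) := le_max_right _ _
                have h2 : -Real.log τ ≤ |Real.log τ| := neg_le_abs _
                linarith
      have hmax0 : (0:ℝ) ≤ max 0 (Real.log T₀) := le_max_left _ _
      have hlog0 : (0:ℝ) ≤ Real.log (n':ℝ) ∨ True := Or.inr trivial
      have hc1 : C*C*τ * ∑ i ∈ range n', (1:ℝ)/((i:ℝ)+1)
          ≤ C*C*τ * (1 + max 0 (Real.log T₀) + |Real.log τ|) := by
        have hsum_le : ∑ i ∈ range n', (1:ℝ)/((i:ℝ)+1)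
            ≤ 1 + max 0 (Real.log T₀) + |Real.log τ| := by linarith
        have : (0:ℝ) ≤ C*C*τ := by positivity
        nlinarith
      have hc2 : (n':ℝ) * (M*C*τ^2) ≤ M*C*T₀*τ := by
        have := mul_le_mul_of_nonneg_right hn'T (show (0:ℝ) ≤ M*C*τ by positivity)
        nlinarith
      have hc3 : C*τ ≤ C*τ*(1 + |Real.log τ|) := by
        nlinarith [mul_nonneg (mul_nonneg hC hτ.le) habs]
      have key : C*C*τ * (1 + max 0 (Real.log T₀) + |Real.log τ|)
          ≤ C*C*(1 + max 0 (Real.log T₀)) * τ * (1 + |Real.log τ|) := by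
          nlinarith [mul_nonneg (mul_nonneg (mul_nonneg (mul_nonneg hC hC) hτ.le) hmax0) habs]
      have hMCT : M*C*T₀*τ ≤ M*C*T₀*τ*(1 + |Real.log τ|) := by
        have : (0:ℝ) ≤ M*C*T₀*τ := by positivity
        nlinarith
      rw [hD]
      nlinarith
  -- Gronwall
  have hfinal : ‖e n‖ ≤ (D * τ * (1 + |Real.log τ|)) * (1 + (M+1)*L*τ)^n := by
    apply gronwall_discrete ((M+1)*L*τ) (D * τ * (1 + |Real.log τ|)) (by positivity)
      (by positivity) (fun k => ‖e k‖) n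
    intro k hk
    have hkT : (k:ℝ) * τ ≤ T₀ := by
      have : (k:ℝ) ≤ (n:ℝ) := by exact_mod_cast hk
      nlinarith
    calc ‖e k‖ ≤ (M+1)*L*τ * ∑ j ∈ range k, ‖e j‖ + ∑ m ∈ range k, c m := hbound k hkT
      _ ≤ (M+1)*L*τ * ∑ j ∈ range k, ‖e j‖ + D * τ * (1 + |Real.log τ|) := by
          linarith [hcost k hkT]
  have hexp : (1 + (M+1)*L*τ)^n ≤ Real.exp ((M+1)*L*T₀) := by
    have h1 : 1 + (M+1)*L*τ ≤ Real.exp ((M+1)*L*τ) := by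
      have := Real.add_one_le_exp ((M+1)*L*τ); linarith
    have h2 : (1 + (M+1)*L*τ)^n ≤ (Real.exp ((M+1)*L*τ))^n := by
      apply pow_le_pow_left₀ (by positivity) h1
    have h3 : (Real.exp ((M+1)*L*τ))^n = Real.exp ((n:ℝ) * ((M+1)*L*τ)) := by
      rw [← Real.exp_nat_mul]
    have h4 : (n:ℝ) * ((M+1)*L*τ) ≤ (M+1)*L*T₀ := by
      have := mul_le_mul_of_nonneg_left hnT (show (0:ℝ) ≤ (M+1)*L by positivity)
      nlinarith
    calc (1 + (M+1)*L*τ)^n ≤ (Real.exp ((M+1)*L*τ))^n := h2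
      _ = Real.exp ((n:ℝ) * ((M+1)*L*τ)) := h3
      _ ≤ Real.exp ((M+1)*L*T₀) := Real.exp_le_exp.mpr h4
  calc ‖e n‖ ≤ (D * τ * (1 + |Real.log τ|)) * (1 + (M+1)*L*τ)^n := hfinal
    _ ≤ (D * τ * (1 + |Real.log τ|)) * Real.exp ((M+1)*L*T₀) := by
        apply mul_le_mul_of_nonneg_left hexp (by positivity)
    _ = D * Real.exp ((M+1)*L*T₀) * τ * (1 + |Real.log τ|) := by ring
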